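/- Let X be a topological space, (f_n)_{n∈ℕ} a sequence of functions from X to the extended reals [−∞,+∞], and f : X → [−∞,+∞]. Suppose that for every x ∈ X the infimum over all sequences (xⁿ) converging to x of limsup_{n→∞} f_n(xⁿ) and the infimum over all such sequences of liminf_{n→∞} f_n(xⁿ) both equal f(x). If moreover there exist x₀ ∈ X and a sequence (xⁿ) converging to x₀ such that liminf_{n→∞} f_n(xⁿ) = liminf_{n→∞} ( inf_{x∈X} f_n(x) ), then f(x₀) = inf_{x∈X} f(x) and the sequence of infima converges: lim_{n→∞} ( inf_{x∈X} f_n(x) ) = inf_{x∈X} f(x). -/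
import Mathlib


open Filter Topology

/-- Under the sequential Γ-convergence hypotheses, if some sequence
`u → x₀` realizes `liminf_n f n (u n) = liminf_n (inf_X f n)`, then `x₀` minimizes
`flim` and the infima converge: `lim_n (inf_X f n) = inf_X flim`. -/
theorem minimizer_of_gammaConvergence {X : Type*} [TopologicalSpace X]
    (f : ℕ → X → EReal) (flim : X → EReal)
    (h1 : ∀ x : X, (⨅ (u : ℕ → X) (_ : Tendsto u atTop (𝓝 x)),
        limsup (fun n => f n (u n)) atTop) = flim x)
    (h2 : ∀ x : X, (⨅ (u : ℕ → X) (_ : Tendsto u atTop (𝓝 x)),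
        liminf (fun n => f n (u n)) atTop) = flim x)
    (x₀ : X) (u : ℕ → X) (hu : Tendsto u atTop (𝓝 x₀))
    (heq : liminf (fun n => f n (u n)) atTop
        = liminf (fun n => ⨅ x : X, f n x) atTop) :
    flim x₀ = ⨅ x : X, flim x ∧
      Tendsto (fun n => ⨅ x : X, f n x) atTop (𝓝 (⨅ x : X, flim x)) := by
  set m : ℕ → EReal := fun n => ⨅ x : X, f n x with hm
  have hA : flim x₀ ≤ liminf m atTop := by
    rw [← heq, ← h2 x₀]
    exact iInf₂_le u hu
  have hB : (⨅ x : X, flim x) ≤ flim x₀ := iInf_le _ _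
  have hC : limsup m atTop ≤ ⨅ x : X, flim x := by
    refine le_iInf fun x => ?_
    rw [← h1 x]
    refine le_iInf₂ fun v hv => ?_
    exact limsup_le_limsup (Eventually.of_forall fun n => iInf_le _ _)
  have hD : liminf m atTop ≤ limsup m atTop := liminf_le_limsup
  have h_ls : limsup m atTop = ⨅ x : X, flim x :=
    le_antisymm hC ((hB.trans hA).trans hD)
  have h_li : liminf m atTop = ⨅ x : X, flim x :=
    le_antisymm (hD.trans hC) (hB.trans hA)
  refine ⟨le_antisymm (hA.trans (hD.trans hC)) hB, ?_⟩
  exact tendsto_of_liminf_eq_limsup h_li h_ls
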